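/- For any fixed s ≥ 0, the function t ↦ Z_s Z_{t-s} / Z_t is decreasing on [s, ∞). Equivalently, for 0 ≤ r ≤ s ≤ t one has Z_s Z_{t-r} ≤ Z_t Z_{s-r}. -/

import Mathlib

open MeasureTheory Real Set

/-- Laplace transform of a measure on ℝ. -/
noncomputable def lapZ (μ : Measure ℝ) (t : ℝ) : ℝ := ∫ x, Real.exp (-t * x) ∂μ

section aux

variable {μ : Measure ℝ} [IsProbabilityMeasure μ]

lemma ae_ge (c : ℝ) (hc : μ (Set.Iio c) = 0) : ∀ᵐ x ∂μ, c ≤ x := by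
  rw [ae_iff]
  convert hc using 2
  ext x
  simp [Set.Iio, not_le]

lemma lapZ_integrable (c : ℝ) (hc : μ (Set.Iio c) = 0) {t : ℝ} (ht : 0 ≤ t) :
    Integrable (fun x => Real.exp (-t * x)) μ := by
  refine (integrable_const (Real.exp (-t * c))).mono' ?_ ?_
  · exact (Real.continuous_exp.comp (continuous_const.mul continuous_id)).aestronglyMeasurable
  · filter_upwards [ae_ge c hc] with x hx
    rw [Real.norm_of_nonneg (Real.exp_nonneg _)]
    exact Real.exp_le_exp.2 (by nlinarith)

lemma lapZ_pos (c : ℝ) (hc : μ (Set.Iio c) = 0) {t : ℝ} (ht : 0 ≤ t) :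
    0 < lapZ μ t := by
  have h : lapZ μ t = ProbabilityTheory.mgf id μ (-t) := by
    simp [lapZ, ProbabilityTheory.mgf]
  rw [h]
  refine ProbabilityTheory.mgf_pos ?_
  simpa [id] using lapZ_integrable c hc ht

lemma lapZ_holder (c : ℝ) (hc : μ (Set.Iio c) = 0) {a b l : ℝ} (ha : 0 ≤ a) (hb : 0 ≤ b)
    (hl0 : 0 < l) (hl1 : l < 1) :
    lapZ μ (l * a + (1 - l) * b) ≤ lapZ μ a ^ l * lapZ μ b ^ (1 - l) := by
  set p := 1 / l with hp
  set q := 1 / (1 - l) with hq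
  have hl1' : 0 < 1 - l := by linarith
  have hpq : p.HolderConjugate q := by
    rw [Real.holderConjugate_iff]
    constructor
    · rw [hp, lt_div_iff₀ hl0]; linarith
    · rw [hp, hq, one_div, one_div, inv_inv, inv_inv]; ring
  set f : ℝ → ℝ := fun x => Real.exp (l * (-a * x)) with hf
  set g : ℝ → ℝ := fun x => Real.exp ((1 - l) * (-b * x)) with hg
  have hmf : AEStronglyMeasurable f μ :=
    (Real.continuous_exp.comp (by continuity)).aestronglyMeasurable
  have hmg : AEStronglyMeasurable g μ :=
    (Real.continuous_exp.comp (by continuity)).aestronglyMeasurable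
  have hfℒ : MemLp f (ENNReal.ofReal p) μ := by
    refine MemLp.of_bound hmf (Real.exp (l * (-a * c))) ?_
    filter_upwards [ae_ge c hc] with x hx
    rw [hf, Real.norm_of_nonneg (Real.exp_nonneg _)]
    refine Real.exp_le_exp.2 ?_
    nlinarith [mul_nonneg (mul_nonneg hl0.le ha) (sub_nonneg.2 hx)]
  have hgℒ : MemLp g (ENNReal.ofReal q) μ := by
    refine MemLp.of_bound hmg (Real.exp ((1 - l) * (-b * c))) ?_
    filter_upwards [ae_ge c hc] with x hx
    rw [hg, Real.norm_of_nonneg (Real.exp_nonneg _)]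
    refine Real.exp_le_exp.2 ?_
    nlinarith [mul_nonneg (mul_nonneg hl1'.le hb) (sub_nonneg.2 hx)]
  have h := integral_mul_le_Lp_mul_Lq_of_nonneg hpq
    (Filter.Eventually.of_forall fun x => (Real.exp_pos _).le)
    (Filter.Eventually.of_forall fun x => (Real.exp_pos _).le)
    hfℒ hgℒ
  have hfg : ∀ x, f x * g x = Real.exp (-(l * a + (1 - l) * b) * x) := by
    intro x
    rw [hf, hg, ← Real.exp_add]
    ring_nf
  have hfp : ∀ x, f x ^ p = Real.exp (-a * x) := by
    intro x
    rw [hf, ← Real.exp_mul, hp]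
    congr 1
    field_simp
  have hgq : ∀ x, g x ^ q = Real.exp (-b * x) := by
    intro x
    rw [hg, ← Real.exp_mul, hq]
    congr 1
    field_simp
  simp only [hf, hg] at hfg hfp hgq
  simp only [hfg, hfp, hgq] at h
  have h1p : 1 / p = l := by rw [hp]; field_simp
  have h1q : 1 / q = 1 - l := by rw [hq]; field_simp
  rw [h1p, h1q] at h
  exact h

lemma lapZ_key (c : ℝ) (hc : μ (Set.Iio c) = 0) {r s t : ℝ} (hr : 0 ≤ r) (hrs : r ≤ s)
    (hst : s ≤ t) : lapZ μ s * lapZ μ (t - r) ≤ lapZ μ t * lapZ μ (s - r) := by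
  rcases eq_or_lt_of_le hst with rfl | hst'
  · rw [mul_comm]
  rcases eq_or_lt_of_le hr with rfl | hr'
  · simp [mul_comm]
  · set l : ℝ := (t - s) / (t - s + r) with hl
    have hden : 0 < t - s + r := by linarith
    have hl0 : 0 < l := div_pos (by linarith) hden
    have hl1 : l < 1 := by
      rw [hl, div_lt_one hden]; linarith
    have ha : (0:ℝ) ≤ s - r := by linarith
    have hb : (0:ℝ) ≤ t := by linarith
    have e1 : l * (s - r) + (1 - l) * t = s := by
      rw [hl]; field_simp; ring
    have e2 : (1 - l) * (s - r) + (1 - (1 - l)) * t = t - r := by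
      rw [hl]; field_simp; ring
    have h1 : lapZ μ s ≤ lapZ μ (s - r) ^ l * lapZ μ t ^ (1 - l) := by
      have := lapZ_holder c hc ha hb hl0 hl1
      rwa [e1] at this
    have h2 : lapZ μ (t - r) ≤ lapZ μ (s - r) ^ (1 - l) * lapZ μ t ^ (1 - (1 - l)) := by
      have := lapZ_holder c hc ha hb (by linarith : (0:ℝ) < 1 - l) (by linarith : 1 - l < 1)
      rwa [e2] at this
    have hA : 0 < lapZ μ (s - r) := lapZ_pos c hc ha
    have hB : 0 < lapZ μ t := lapZ_pos c hc hb
    have hmul := mul_le_mul h1 h2 ((lapZ_pos c hc (by linarith : (0:ℝ) ≤ t - r)).le)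
      (by positivity)
    calc lapZ μ s * lapZ μ (t - r)
        ≤ lapZ μ (s - r) ^ l * lapZ μ t ^ (1 - l) *
            (lapZ μ (s - r) ^ (1 - l) * lapZ μ t ^ (1 - (1 - l))) := hmul
      _ = lapZ μ t * lapZ μ (s - r) := by
          rw [mul_mul_mul_comm, ← Real.rpow_add hA, ← Real.rpow_add hB]
          have : l + (1 - l) = 1 := by ring
          rw [this]
          have : (1 - l) + (1 - (1 - l)) = 1 := by ring
          rw [this, Real.rpow_one, Real.rpow_one, mul_comm]

end aux

/-- For fixed `s ≥ 0`, the function `t ↦ Z_s Z_{t-s} / Z_t` is decreasing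
on `[s, ∞)`; equivalently `Z_s Z_{t-r} ≤ Z_t Z_{s-r}` for `0 ≤ r ≤ s ≤ t`. -/
theorem stmt_2 (μ : Measure ℝ) [IsProbabilityMeasure μ]
    (hbdd : ∃ c : ℝ, μ (Set.Iio c) = 0) :
    (∀ s : ℝ, 0 ≤ s →
        AntitoneOn (fun t => lapZ μ s * lapZ μ (t - s) / lapZ μ t) (Set.Ici s))
      ∧ ∀ r s t : ℝ, 0 ≤ r → r ≤ s → s ≤ t →
          lapZ μ s * lapZ μ (t - r) ≤ lapZ μ t * lapZ μ (s - r) := by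
  obtain ⟨c, hc⟩ := hbdd
  have key : ∀ r s t : ℝ, 0 ≤ r → r ≤ s → s ≤ t →
      lapZ μ s * lapZ μ (t - r) ≤ lapZ μ t * lapZ μ (s - r) :=
    fun r s t hr hrs hst => lapZ_key c hc hr hrs hst
  refine ⟨fun s hs t1 ht1 t2 ht2 h12 => ?_, key⟩
  simp only
  have h1 : 0 < lapZ μ t1 := lapZ_pos c hc (le_trans hs ht1)
  have h2 : 0 < lapZ μ t2 := lapZ_pos c hc (le_trans hs ht2)
  rw [div_le_div_iff₀ h2 h1]
  have := key s t1 t2 hs ht1 h12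
  have hZs : 0 ≤ lapZ μ s := (lapZ_pos c hc hs).le
  calc lapZ μ s * lapZ μ (t2 - s) * lapZ μ t1
      = lapZ μ s * (lapZ μ t1 * lapZ μ (t2 - s)) := by ring
    _ ≤ lapZ μ s * (lapZ μ t2 * lapZ μ (t1 - s)) := by
        exact mul_le_mul_of_nonneg_left this hZs
    _ = lapZ μ s * lapZ μ (t1 - s) * lapZ μ t2 := by ring
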